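/- (Brylawski's short-circuit criterion) Let M be a matroid on linearly ordered ground set E and X an initial flat. Then X is modular if and only if for every circuit C of M, either C ⊆ X, or C ⊆ E \ X, or the boundary ∂(C \ X) := cl(C \ X) \ (C \ X) is nonempty and its least element lies in X. -/

import Mathlib

variable {α : Type*}

/-- `C` is a circuit of `M`: a minimal dependent (finite) set. -/
def Matroid.IsCircuitF (M : Matroid α) (C : Finset α) : Prop :=
  ↑C ⊆ M.E ∧ ¬ M.Indep ↑C ∧ ∀ D : Finset α, D ⊂ C → M.Indep ↑D

/-- `M` has no loops. -/
def MLoopless (M : Matroid α) : Prop := ∀ e ∈ M.E, M.Indep {e}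

/-- The rank of a set in a matroid: the supremum of the cardinalities of its
independent subsets. -/
noncomputable def rkOf (M : Matroid α) (S : Set α) : ℕ :=
  sSup {n | ∃ I : Set α, M.Indep I ∧ I ⊆ S ∧ I.ncard = n}

/-- `X` is a modular flat of `M`: `rk X + rk Y = rk (X ∨ Y) + rk (X ∧ Y)`
for every flat `Y`. -/
def ModularFlat (M : Matroid α) (X : Set α) : Prop :=
  M.IsFlat X ∧ ∀ Y : Set α, M.IsFlat Y →
    rkOf M X + rkOf M Y = rkOf M (X ∪ Y) + rkOf M (X ∩ Y)

section Ordered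
variable [LinearOrder α]

/-- `B` is a broken circuit of `M`: a circuit with its least element removed. -/
def Matroid.IsBrokenCircuit (M : Matroid α) (B : Finset α) : Prop :=
  ∃ (C : Finset α) (i : α), M.IsCircuitF C ∧ i ∈ C ∧ (∀ j ∈ C, i ≤ j) ∧ B = C.erase i

/-- `S` is a face of the broken circuit complex `bc(M)`:
a subset of the ground set containing no broken circuit. -/
def Matroid.BCFace (M : Matroid α) (S : Finset α) : Prop :=
  ↑S ⊆ M.E ∧ ∀ B : Finset α, M.IsBrokenCircuit B → ¬ B ⊆ S

/-- `X` is an initial flat: a flat whose elements precede all other elements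
of the ground set in the order. -/
def InitialFlat (M : Matroid α) (X : Set α) : Prop :=
  M.IsFlat X ∧ ∀ x ∈ X, ∀ e ∈ M.E \ X, x < e

/-- The broken circuits of the complete principal truncation `T_X(M)`.
`T_X(M)` lives on `{0} ∪ (E \ X)` where the new element `0` (which does not
need a name here, since broken circuits never contain the least element `0`)
is least in the order.  Its circuits avoiding `0` are the circuits of `M`
contained in `E \ X`, and `S ∪ {0}` is a circuit of `T_X(M)` exactly when
`S ⊆ E \ X` is minimal such that its `M`-closure meets `X`.  Hence its broken
circuits are: circuits of `M` inside `E \ X` minus their least element, and the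
minimal sets `S ⊆ E \ X` whose closure meets `X`. -/
def TruncBrokenCircuit (M : Matroid α) (X : Set α) (B : Finset α) : Prop :=
  (∃ (C : Finset α) (i : α), M.IsCircuitF C ∧ ↑C ⊆ M.E \ X ∧ i ∈ C ∧
      (∀ j ∈ C, i ≤ j) ∧ B = C.erase i)
  ∨ (↑B ⊆ M.E \ X ∧ (M.closure ↑B ∩ X).Nonempty ∧
      ∀ B' : Finset α, B' ⊂ B → ¬ (M.closure ↑B' ∩ X).Nonempty)

/-- `S` is a face of the reduced broken circuit complex `bc₀(T_X(M))`:
a subset of `E \ X` (faces of the reduced complex avoid the least element `0`)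
containing no broken circuit of `T_X(M)`. -/
def TruncBC0Face (M : Matroid α) (X : Set α) (S : Finset α) : Prop :=
  ↑S ⊆ M.E \ X ∧ ∀ B : Finset α, TruncBrokenCircuit M X B → ¬ B ⊆ S

end Ordered


section AuxRk

open Set Matroid

variable {M : Matroid α} {S T I J : Set α}

lemma rkOf_bddAbove (hfin : M.E.Finite) (S : Set α) :
    BddAbove {n | ∃ I : Set α, M.Indep I ∧ I ⊆ S ∧ I.ncard = n} := by
  refine ⟨M.E.ncard, ?_⟩
  rintro n ⟨I, hI, -, rfl⟩
  exact Set.ncard_le_ncard hI.subset_ground hfin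

lemma le_rkOf (hfin : M.E.Finite) (hI : M.Indep I) (hIS : I ⊆ S) :
    I.ncard ≤ rkOf M S :=
  le_csSup (rkOf_bddAbove hfin S) ⟨I, hI, hIS, rfl⟩

lemma rkOf_basis' (hfin : M.E.Finite) (hI : M.IsBasis' I S) : rkOf M S = I.ncard := by
  refine IsGreatest.csSup_eq ⟨⟨I, hI.indep, hI.subset, rfl⟩, ?_⟩
  rintro n ⟨J, hJ, hJS, rfl⟩
  obtain ⟨J', hJ', hJJ'⟩ := hJ.subset_isBasis'_of_subset hJS
  have hcard := hJ'.encard_eq_encard hI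
  have hJ'fin : J'.Finite := hfin.subset hJ'.indep.subset_ground
  calc J.ncard ≤ J'.ncard := Set.ncard_le_ncard hJJ' hJ'fin
    _ = I.ncard := by rw [Set.ncard_def, hcard, ← Set.ncard_def]

lemma rkOf_basis (hfin : M.E.Finite) (hI : M.IsBasis I S) : rkOf M S = I.ncard :=
  rkOf_basis' hfin hI.isBasis'

lemma rkOf_indep (hfin : M.E.Finite) (hI : M.Indep I) : rkOf M I = I.ncard :=
  rkOf_basis' hfin hI.isBasis_self.isBasis'

lemma rkOf_empty (hfin : M.E.Finite) : rkOf (M : Matroid α) (∅ : Set α) = 0 := by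
  rw [rkOf_indep hfin M.empty_indep, Set.ncard_empty]

lemma rkOf_mono (hfin : M.E.Finite) (h : S ⊆ T) : rkOf M S ≤ rkOf M T := by
  obtain ⟨I, hI⟩ := M.exists_isBasis' S
  rw [rkOf_basis' hfin hI]
  exact le_rkOf hfin hI.indep (hI.subset.trans h)

lemma rkOf_closure (hfin : M.E.Finite) (S : Set α) :
    rkOf M (M.closure S) = rkOf M S := by
  obtain ⟨I, hI⟩ := M.exists_isBasis' S
  rw [rkOf_basis' hfin hI, rkOf_basis hfin hI.isBasis_closure_right]

lemma rkOf_submod (hfin : M.E.Finite) (hS : S ⊆ M.E) (hT : T ⊆ M.E) :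
    rkOf M (S ∪ T) + rkOf M (S ∩ T) ≤ rkOf M S + rkOf M T := by
  obtain ⟨I, hI⟩ := M.exists_isBasis (S ∩ T) (inter_subset_left.trans hS)
  obtain ⟨J, hJ, hIJ⟩ := hI.indep.subset_isBasis_of_subset
    (hI.subset.trans (inter_subset_left.trans subset_union_left)) (union_subset hS hT)
  rw [rkOf_basis hfin hI, rkOf_basis hfin hJ]
  have hJfin : J.Finite := hfin.subset hJ.indep.subset_ground
  have hIsub : I ⊆ J ∩ (S ∩ T) := subset_inter hIJ hI.subset
  have hJS : M.Indep (J ∩ S) := hJ.indep.inter_right S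
  have hJT : M.Indep (J ∩ T) := hJ.indep.inter_right T
  have h1 : (J ∩ S) ∪ (J ∩ T) = J := by
    rw [← Set.inter_union_distrib_left, Set.inter_eq_self_of_subset_left hJ.subset]
  have h2 : (J ∩ S) ∩ (J ∩ T) = J ∩ (S ∩ T) := by
    ext a; simp only [Set.mem_inter_iff]; tauto
  have h3 := Set.ncard_union_add_ncard_inter (J ∩ S) (J ∩ T)
    (hJfin.subset inter_subset_left) (hJfin.subset inter_subset_left)
  rw [h1, h2] at h3
  have h4 : I.ncard ≤ (J ∩ (S ∩ T)).ncard :=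
    Set.ncard_le_ncard hIsub (hJfin.subset inter_subset_left)
  have h5 : (J ∩ S).ncard ≤ rkOf M S := le_rkOf hfin hJS inter_subset_right
  have h6 : (J ∩ T).ncard ≤ rkOf M T := le_rkOf hfin hJT inter_subset_right
  omega

lemma rkOf_union_le (hfin : M.E.Finite) (hS : S ⊆ M.E) (hT : T ⊆ M.E) :
    rkOf M (S ∪ T) ≤ rkOf M S + rkOf M T :=
  le_trans (Nat.le_add_right _ _) (rkOf_submod hfin hS hT)

lemma closure_flat' (M : Matroid α) (X : Set α) : M.IsFlat (M.closure X) := by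
  rw [Matroid.closure_def, Set.sInter_eq_iInter]
  have hne : Nonempty {F : Set α // F ∈ {F | M.IsFlat F ∧ X ∩ M.E ⊆ F}} :=
    ⟨⟨M.E, M.ground_isFlat, inter_subset_right⟩⟩
  exact Matroid.IsFlat.iInter fun F => F.2.1

lemma exists_circuitF (M : Matroid α) (D : Finset α) (hDE : ↑D ⊆ M.E)
    (hdep : ¬ M.Indep (↑D : Set α)) : ∃ C, M.IsCircuitF C ∧ C ⊆ D := by
  induction D using Finset.strongInduction with
  | _ D ih =>
    by_cases h : ∀ D' : Finset α, D' ⊂ D → M.Indep (↑D' : Set α)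
    · exact ⟨D, ⟨hDE, hdep, h⟩, subset_rfl⟩
    · push_neg at h
      obtain ⟨D', hsub, hdep'⟩ := h
      obtain ⟨C, hC, hCD⟩ := ih D' hsub
        ((Finset.coe_subset.2 hsub.subset).trans hDE) hdep'
      exact ⟨C, hC, hCD.trans hsub.subset⟩

lemma circuit_mem_closure {C : Finset α} (hC : M.IsCircuitF C) {f : α} (hf : f ∈ C) :
    f ∈ M.closure ((↑C : Set α) \ {f}) := by
  classical
  have hind : M.Indep (↑(C.erase f) : Set α) := hC.2.2 _ (Finset.erase_ssubset hf)
  have hcoe : (↑(C.erase f) : Set α) = (↑C : Set α) \ {f} := by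
    simp [Finset.coe_erase]
  have hins : insert f (↑(C.erase f) : Set α) = (↑C : Set α) := by
    rw [← Finset.coe_insert, Finset.insert_erase hf]
  rw [← hcoe]
  exact hind.mem_closure_iff.2 (Or.inl (by rw [hins]; exact ⟨hC.2.1, hC.1⟩))

end AuxRk

open Set Matroid

/-- Brylawski's short-circuit criterion: an initial flat `X` is
modular iff for every circuit `C`, either `C ⊆ X`, or `C ⊆ E \ X`, or the
boundary `∂(C \ X) = cl(C \ X) \ (C \ X)` is nonempty and its least element
lies in `X`. -/
theorem stmt5 [LinearOrder α] (M : Matroid α) (hfin : M.E.Finite)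
    (hll : MLoopless M) (X : Set α) (hX : InitialFlat M X) :
    ModularFlat M X ↔
      ∀ C : Finset α, M.IsCircuitF C →
        ↑C ⊆ X ∨ ↑C ⊆ M.E \ X ∨
        (∃ m ∈ M.closure (↑C \ X) \ (↑C \ X),
          (∀ y ∈ M.closure (↑C \ X) \ (↑C \ X), m ≤ y) ∧ m ∈ X) := by
  constructor
  · -- modular implies circuit condition
    intro hmod C hC
    by_cases h1 : (↑C : Set α) ⊆ X
    · exact Or.inl h1
    by_cases h2 : (↑C : Set α) ⊆ M.E \ X
    · exact Or.inr (Or.inl h2)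
    refine Or.inr (Or.inr ?_)
    classical
    have hCE : (↑C : Set α) ⊆ M.E := hC.1
    have hXE : X ⊆ M.E := hX.1.subset_ground
    set S : Set α := (↑C : Set α) \ X with hSdef
    have hSE : S ⊆ M.E := diff_subset.trans hCE
    have hSfin : S.Finite := (C.finite_toSet).subset diff_subset
    obtain ⟨e, heC, heX⟩ : ∃ e ∈ (↑C : Set α), e ∈ X := by
      by_contra h
      push_neg at h
      exact h2 fun a ha => ⟨hCE ha, h a ha⟩
    obtain ⟨f, hfC, hfX⟩ : ∃ f ∈ (↑C : Set α), f ∉ X := not_subset.mp h1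
    have hfS : f ∈ S := ⟨hfC, hfX⟩
    -- S is independent
    have hSindep : M.Indep S := by
      have hD : C.filter (fun a => a ∉ X) ⊂ C := by
        refine (Finset.ssubset_iff_of_subset (Finset.filter_subset _ _)).2 ?_
        exact ⟨e, heC, by simp [heX]⟩
      have := hC.2.2 _ hD
      have hcoe : (↑(C.filter (fun a => a ∉ X)) : Set α) = S := by
        ext a; simp [hSdef]
      rwa [hcoe] at this
    set Y := M.closure S with hYdef
    have hYflat : M.IsFlat Y := closure_flat' M S
    have hmodY := hmod.2 Y hYflat
    have hrkY : rkOf M Y = S.ncard := by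
      rw [hYdef, rkOf_closure hfin, rkOf_indep hfin hSindep]
    -- f is in the closure of X ∪ (S \ {f})
    have hfcl : f ∈ M.closure ((↑C : Set α) \ {f}) :=
      circuit_mem_closure hC (Finset.mem_coe.mp hfC)
    have hsub : (↑C : Set α) \ {f} ⊆ X ∪ (S \ {f}) := by
      rintro a ⟨haC, haf⟩
      by_cases haX : a ∈ X
      · exact Or.inl haX
      · exact Or.inr ⟨⟨haC, haX⟩, haf⟩
    have hfcl2 : f ∈ M.closure (X ∪ (S \ {f})) := M.closure_subset_closure hsub hfcl
    have hXS : X ∪ S = insert f (X ∪ (S \ {f})) := by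
      calc X ∪ S = X ∪ insert f (S \ {f}) := by
            rw [Set.insert_diff_singleton, Set.insert_eq_self.2 hfS]
        _ = insert f (X ∪ (S \ {f})) := by rw [Set.union_insert]
    have hcleq : M.closure (X ∪ S) = M.closure (X ∪ (S \ {f})) := by
      rw [hXS, Matroid.closure_insert_eq_of_mem_closure hfcl2]
    have h5 : rkOf M (X ∪ Y) ≤ rkOf M X + (S \ {f}).ncard := by
      have hsub2 : X ∪ Y ⊆ M.closure (X ∪ (S \ {f})) := by
        rw [← hcleq]
        refine union_subset ?_ ?_
        · exact M.subset_closure_of_subset subset_union_left (union_subset hXE hSE)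
        · exact M.closure_subset_closure subset_union_right
      calc rkOf M (X ∪ Y) ≤ rkOf M (M.closure (X ∪ (S \ {f}))) := rkOf_mono hfin hsub2
        _ = rkOf M (X ∪ (S \ {f})) := rkOf_closure hfin _
        _ ≤ rkOf M X + rkOf M (S \ {f}) :=
            rkOf_union_le hfin hXE ((diff_subset.trans hSE))
        _ = rkOf M X + (S \ {f}).ncard := by
            rw [rkOf_indep hfin (hSindep.subset diff_subset)]
    have hcard : (S \ {f}).ncard + 1 = S.ncard :=
      Set.ncard_diff_singleton_add_one hfS hSfin
    have hXYne : (X ∩ Y).Nonempty := by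
      by_contra hempty
      rw [Set.not_nonempty_iff_eq_empty] at hempty
      rw [hrkY, hempty, rkOf_empty hfin] at hmodY
      omega
    obtain ⟨x, hxX, hxY⟩ := hXYne
    have hxT : x ∈ M.closure S \ S := ⟨hxY, fun hxS => hxS.2 hxX⟩
    have hTfin : (M.closure S \ S).Finite :=
      hfin.subset (diff_subset.trans (M.closure_subset_ground S))
    have hTne : hTfin.toFinset.Nonempty := ⟨x, hTfin.mem_toFinset.2 hxT⟩
    set m := hTfin.toFinset.min' hTne with hmdef
    have hmT : m ∈ M.closure S \ S := hTfin.mem_toFinset.1 (hTfin.toFinset.min'_mem hTne)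
    have hmle : ∀ y ∈ M.closure S \ S, m ≤ y := fun y hy =>
      hTfin.toFinset.min'_le y (hTfin.mem_toFinset.2 hy)
    have hmX : m ∈ X := by
      by_contra hmX
      have hmE : m ∈ M.E := M.closure_subset_ground S hmT.1
      have := hX.2 x hxX m ⟨hmE, hmX⟩
      exact absurd this (not_lt.2 (hmle x hxT))
    exact ⟨m, hmT, hmle, hmX⟩
  · -- circuit condition implies modular
    intro h
    refine ⟨hX.1, fun Y hY => ?_⟩
    classical
    have hXE : X ⊆ M.E := hX.1.subset_ground
    have hYE : Y ⊆ M.E := hY.subset_ground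
    obtain ⟨I, hI⟩ := M.exists_isBasis (X ∩ Y) (inter_subset_left.trans hXE)
    obtain ⟨BY, hBY, hIBY⟩ := hI.indep.subset_isBasis_of_subset
      (hI.subset.trans inter_subset_right) hYE
    obtain ⟨BX, hBX, hIBX⟩ := hI.indep.subset_isBasis_of_subset
      (hI.subset.trans inter_subset_left) hXE
    set J : Set α := BY \ I with hJdef
    have hJX : ∀ j ∈ J, j ∉ X := by
      rintro j ⟨hjBY, hjI⟩ hjX
      have hjXY : j ∈ X ∩ Y := ⟨hjX, hBY.subset hjBY⟩
      have hjind : M.Indep (insert j I) :=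
        hBY.indep.subset (insert_subset hjBY hIBY)
      exact hjI (hI.mem_of_insert_indep hjXY hjind)
    have hIJ : I ∪ J = BY := Set.union_diff_cancel hIBY
    have hBXfin : BX.Finite := hfin.subset hBX.indep.subset_ground
    have hBYfin : BY.Finite := hfin.subset hBY.indep.subset_ground
    have hJfin : J.Finite := hBYfin.subset diff_subset
    -- BX ∪ J is independent
    have hKind : M.Indep (BX ∪ J) := by
      by_contra hdep
      have hKE : BX ∪ J ⊆ M.E :=
        union_subset hBX.indep.subset_ground (diff_subset.trans hBY.indep.subset_ground)
      have hKfin : (BX ∪ J).Finite := hfin.subset hKE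
      obtain ⟨C, hC, hCK⟩ := exists_circuitF M hKfin.toFinset
        (by rwa [Set.Finite.coe_toFinset]) (by rwa [Set.Finite.coe_toFinset])
      have hCK' : (↑C : Set α) ⊆ BX ∪ J := by
        rw [← hKfin.coe_toFinset]
        exact Finset.coe_subset.2 hCK
      have hnX : ¬ (↑C : Set α) ⊆ X := by
        intro hsub
        have hCBX : (↑C : Set α) ⊆ BX := fun a ha =>
          (hCK' ha).elim id (fun haJ => absurd (hsub ha) (hJX a haJ))
        exact hC.2.1 (hBX.indep.subset hCBX)
      have hnEX : ¬ (↑C : Set α) ⊆ M.E \ X := by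
        intro hsub
        have hCBY : (↑C : Set α) ⊆ BY := fun a ha =>
          (hCK' ha).elim (fun haBX => absurd (hBX.subset haBX) (hsub ha).2)
            (fun haJ => haJ.1)
        exact hC.2.1 (hBY.indep.subset hCBY)
      obtain ⟨m, hm, -, hmX⟩ := ((h C hC).resolve_left hnX).resolve_left hnEX
      have hCJ : (↑C : Set α) \ X ⊆ J := by
        rintro a ⟨haC, haX⟩
        exact (hCK' haC).elim (fun h' => absurd (hBX.subset h') haX) id
      have hmJ : m ∈ M.closure J := M.closure_subset_closure hCJ hm.1
      have hmY : m ∈ Y := by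
        have hclJ : M.closure J ⊆ Y := by
          calc M.closure J ⊆ M.closure BY := M.closure_subset_closure diff_subset
            _ = M.closure Y := hBY.closure_eq_closure
            _ = Y := hY.closure
        exact hclJ hmJ
      have hmI : m ∈ M.closure I := hI.subset_closure ⟨hmX, hmY⟩
      have hdisj : I ∩ J = (∅ : Set α) :=
        Set.eq_empty_iff_forall_notMem.2 fun a ⟨haI, haJ⟩ =>
          hJX a haJ (hI.subset haI).1
      have hBYI : M.Indep (I ∪ J) := hIJ ▸ hBY.indep
      have hm0 : m ∈ M.closure (∅ : Set α) := by
        have hmm : m ∈ M.closure (I ∩ J) := by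
          rw [hBYI.closure_inter_eq_inter_closure]
          exact ⟨hmI, hmJ⟩
        rwa [hdisj] at hmm
      have hmE : m ∈ M.E := M.closure_subset_ground _ hm0
      have hmdep := M.empty_indep.mem_closure_iff.1 hm0
      rcases hmdep with hd | hmem
      · exact hd.1 (by simpa using hll m hmE)
      · exact hmem
    -- conclude
    have hsubmod := rkOf_submod hfin hXE hYE
    have hKXY : BX ∪ J ⊆ X ∪ Y :=
      union_subset (hBX.subset.trans subset_union_left)
        ((diff_subset.trans hBY.subset).trans subset_union_right)
    have hK : (BX ∪ J).ncard ≤ rkOf M (X ∪ Y) := le_rkOf hfin hKind hKXY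
    have hdisjBXJ : Disjoint BX J :=
      Set.disjoint_left.2 fun a haBX haJ => hJX a haJ (hBX.subset haBX)
    have hcardK : (BX ∪ J).ncard = BX.ncard + J.ncard :=
      Set.ncard_union_eq hdisjBXJ hBXfin hJfin
    have hJcard : J.ncard + I.ncard = BY.ncard :=
      Set.ncard_diff_add_ncard_of_subset hIBY hBYfin
    rw [rkOf_basis hfin hBX, rkOf_basis hfin hBY, rkOf_basis hfin hI] at *
    omega
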